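/- Fix ρ₁, ρ₂, κ₁, κ₂ > 0 and set ρ₃ = (ρ₁+ρ₂)/2 and α = (ρ₂−ρ₁)/(ρ₂+ρ₁). For κ₃ ∈ [−√(κ₁κ₂), √(κ₁κ₂)] let κ = √(κ₁κ₂ − κ₃²) and define ω(κ₃) ∈ ℂ by: ω = ((2κ)^{1+α}/(κ₂ρ₃^α))·(Γ(−α)/Γ(1+α))·Γ(1 + (α/2)(1 + iκ₃/κ)) / Γ(−(α/2)(1 − iκ₃/κ)) if ρ₁ ≠ ρ₂ and κ > 0; ω = ((iακ₃)^{1+α}/(κ₂ρ₃^α))·Γ(−α)/Γ(1+α) if ρ₁ ≠ ρ₂ and κ = 0; ω = (κ − iκ₃)/κ₂ if ρ₁ = ρ₂. Then the function κ₃ ↦ arg ω(κ₃) is a strictly decreasing, odd bijection from [−√(κ₁κ₂), √(κ₁κ₂)] onto [−(π/2)(1−|α|), (π/2)(1−|α|)]. -/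

import Mathlib

open Real Set

noncomputable section


lemma arg_mk_pos {x y : ℝ} (hx : 0 < x) :
    Complex.arg ((x : ℂ) + (y : ℝ) * Complex.I) = Real.arctan (y / x) := by
  set z : ℂ := (x : ℂ) + (y : ℝ) * Complex.I with hzdef
  have hz : z.re = x := by simp [hzdef]
  have hz' : z.im = y := by simp [hzdef]
  have h1 : |Complex.arg z| < π/2 :=
    Complex.abs_arg_lt_pi_div_two_iff.2 (Or.inl (by rw [hz]; exact hx))
  have h2 := Complex.tan_arg z
  rw [hz, hz'] at h2
  rw [← h2, Real.arctan_tan (by linarith [(abs_lt.1 h1).1]) (by linarith [(abs_lt.1 h1).2])]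

lemma tanh_abs_lt_one (x : ℝ) : |Real.tanh x| < 1 := by
  have hc := Real.cosh_pos x
  have hsq := Real.cosh_sq x
  rw [Real.tanh_eq_sinh_div_cosh, abs_div, abs_of_pos hc, div_lt_one hc]
  nlinarith [abs_nonneg (Real.sinh x), sq_abs (Real.sinh x)]

lemma tanh_strictMono : StrictMono Real.tanh := by
  intro x y hxy
  have hcx := Real.cosh_pos x
  have hcy := Real.cosh_pos y
  rw [Real.tanh_eq_sinh_div_cosh, Real.tanh_eq_sinh_div_cosh, div_lt_div_iff₀ hcx hcy]
  have h : Real.sinh (x - y) < 0 := by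
    rw [← Real.sinh_zero]
    exact Real.sinh_lt_sinh.2 (by linarith)
  rw [Real.sinh_sub] at h
  linarith

lemma tanh_surj {v : ℝ} (hv : |v| < 1) : ∃ x : ℝ, Real.tanh x = v := by
  have hv1 : -1 < v := by linarith [(abs_lt.1 hv).1]
  have hv2 : v < 1 := (abs_lt.1 hv).2
  refine ⟨Real.log ((1 + v) / (1 - v)) / 2, ?_⟩
  set x := Real.log ((1 + v) / (1 - v)) / 2 with hx
  have hpos : (0:ℝ) < (1 + v) / (1 - v) := div_pos (by linarith) (by linarith)
  have hE : Real.exp x * Real.exp x = (1 + v) / (1 - v) := by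
    rw [← Real.exp_add, hx]
    rw [show Real.log ((1 + v) / (1 - v)) / 2 + Real.log ((1 + v) / (1 - v)) / 2
        = Real.log ((1 + v) / (1 - v)) by ring]
    exact Real.exp_log hpos
  have hp := Real.exp_pos x
  rw [Real.tanh_eq_sinh_div_cosh, Real.sinh_eq, Real.cosh_eq, Real.exp_neg]
  rw [div_div_div_cancel_right₀]
  · have hE' : Real.exp x * Real.exp x * (1 - v) = 1 + v := by
      rw [hE, div_mul_eq_mul_div, mul_div_assoc, div_self (by linarith : (1:ℝ) - v ≠ 0), mul_one]
    field_simp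
    nlinarith [hE']
  · positivity


lemma abstract_main {m B : ℝ} (hm : 0 < m) (hB : 0 < B) (G : ℝ → ℝ)
    (hGmono : StrictMono G) (hGodd : ∀ t, G (-t) = -G t)
    (hGbdd : ∀ t, |G t| < B) (hGsurj : ∀ y, |y| < B → ∃ t, G t = y)
    (f : ℝ → ℝ)
    (hfi : ∀ x ∈ Ioo (-m) m, f x = -G (x / Real.sqrt (m ^ 2 - x ^ 2)))
    (hfl : f (-m) = B) (hfr : f m = -B) :
    StrictAntiOn f (Icc (-m) m) ∧ (∀ x ∈ Icc (-m) m, f (-x) = -f x) ∧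
      BijOn f (Icc (-m) m) (Icc (-B) B) := by
  have hsub : ∀ x : ℝ, x ∈ Ioo (-m) m → 0 < m ^ 2 - x ^ 2 := by
    intro x hx; nlinarith [hx.1, hx.2]
  have hsqrt : ∀ x ∈ Ioo (-m) m, 0 < Real.sqrt (m ^ 2 - x ^ 2) :=
    fun x hx => Real.sqrt_pos.2 (hsub x hx)
  have hTmono : ∀ x ∈ Ioo (-m) m, ∀ y ∈ Ioo (-m) m, x < y →
      x / Real.sqrt (m ^ 2 - x ^ 2) < y / Real.sqrt (m ^ 2 - y ^ 2) := by
    intro x hx y hy hxy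
    have hx2 := hsub x hx; have hy2 := hsub y hy
    have sx := hsqrt x hx; have sy := hsqrt y hy
    have sx2 : Real.sqrt (m^2 - x^2) ^ 2 = m^2 - x^2 := Real.sq_sqrt hx2.le
    have sy2 : Real.sqrt (m^2 - y^2) ^ 2 = m^2 - y^2 := Real.sq_sqrt hy2.le
    rw [div_lt_div_iff₀ sx sy]
    rcases le_or_gt x 0 with h0 | h0
    · rcases lt_or_ge y 0 with h1 | h1
      · have hsq : ((-y) * Real.sqrt (m^2 - x^2))^2 < ((-x) * Real.sqrt (m^2 - y^2))^2 := by
          rw [mul_pow, mul_pow, sx2, sy2]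
          have hxy2 : 0 < x^2 - y^2 := by nlinarith
          have hm2 : (0:ℝ) < m^2 := by nlinarith [sq_nonneg x]
          nlinarith [mul_pos hxy2 hm2]
        have := lt_of_pow_lt_pow_left₀ 2 (mul_pos (show (0:ℝ) < -x by linarith) sy).le hsq
        linarith
      · nlinarith [sx, sy, mul_pos sx sy]
    · have hsq : (x * Real.sqrt (m^2 - y^2))^2 < (y * Real.sqrt (m^2 - x^2))^2 := by
        rw [mul_pow, mul_pow, sx2, sy2]
        have hxy2 : 0 < y^2 - x^2 := by nlinarith
        have hm2 : (0:ℝ) < m^2 := by nlinarith [sq_nonneg x]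
        nlinarith [mul_pos hxy2 hm2]
      have := lt_of_pow_lt_pow_left₀ 2 (mul_pos (show (0:ℝ) < y by linarith) sx).le hsq
      linarith
  have hint : ∀ x ∈ Ioo (-m) m, |f x| < B := by
    intro x hx; rw [hfi x hx, abs_neg]; exact hGbdd _
  have hanti : StrictAntiOn f (Icc (-m) m) := by
    intro x hx y hy hxy
    rcases eq_or_lt_of_le hx.1 with hxm | hxm
    · rw [← hxm, hfl]
      rcases eq_or_lt_of_le hy.2 with hym | hym
      · rw [hym, hfr]; linarith
      · have hyI : y ∈ Ioo (-m) m := ⟨by rw [← hxm] at hxy; exact hxy, hym⟩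
        have := (abs_lt.1 (hint y hyI)).2; linarith
    · rcases eq_or_lt_of_le hy.2 with hym | hym
      · rw [hym, hfr]
        have hxI : x ∈ Ioo (-m) m := ⟨hxm, by rw [hym] at hxy; exact hxy⟩
        have := (abs_lt.1 (hint x hxI)).1; linarith
      · have hxI : x ∈ Ioo (-m) m := ⟨hxm, lt_trans hxy hym⟩
        have hyI : y ∈ Ioo (-m) m := ⟨lt_trans hxm hxy, hym⟩
        rw [hfi x hxI, hfi y hyI]
        have := hGmono (hTmono x hxI y hyI hxy)
        linarith
  refine ⟨hanti, ?_, ?_⟩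
  · intro x hx
    rcases eq_or_lt_of_le hx.1 with h1 | h1
    · rw [← h1, neg_neg, hfr, hfl]
    rcases eq_or_lt_of_le hx.2 with h2 | h2
    · rw [h2, hfl, hfr, neg_neg]
    · have hxI : x ∈ Ioo (-m) m := ⟨h1, h2⟩
      have hnxI : -x ∈ Ioo (-m) m := ⟨by linarith [hx.2], by linarith [hx.1]⟩
      rw [hfi _ hnxI, hfi _ hxI]
      have heq : (-x) / Real.sqrt (m^2 - (-x)^2) = -(x / Real.sqrt (m^2 - x^2)) := by
        rw [neg_sq, neg_div]
      rw [heq, hGodd, neg_neg]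
  · refine ⟨?_, hanti.injOn, ?_⟩
    · intro x hx
      rcases eq_or_lt_of_le hx.1 with h1 | h1
      · rw [← h1, hfl]; exact ⟨by linarith, le_refl _⟩
      rcases eq_or_lt_of_le hx.2 with h2 | h2
      · rw [h2, hfr]; exact ⟨le_refl _, by linarith⟩
      · have := abs_lt.1 (hint x ⟨h1, h2⟩)
        exact ⟨by linarith [this.1], by linarith [this.2]⟩
    · intro y hy
      rcases eq_or_lt_of_le hy.1 with h1 | h1
      · exact ⟨m, ⟨by linarith, le_refl m⟩, by rw [hfr, h1]⟩
      rcases eq_or_lt_of_le hy.2 with h2 | h2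
      · exact ⟨-m, ⟨le_refl _, by linarith⟩, by rw [hfl, h2]⟩
      · obtain ⟨t, ht⟩ := hGsurj (-y) (abs_lt.2 ⟨by linarith, by linarith⟩)
        have hs : 0 < Real.sqrt (1 + t^2) := Real.sqrt_pos.2 (by positivity)
        have hs2 : Real.sqrt (1 + t^2) ^ 2 = 1 + t^2 := Real.sq_sqrt (by positivity)
        set x := m * t / Real.sqrt (1 + t^2) with hxdef
        have hxm2 : x^2 < m^2 := by
          rw [hxdef, div_pow, mul_pow, hs2, div_lt_iff₀ (by positivity)]
          nlinarith [hm, sq_nonneg t]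
        have hxI : x ∈ Ioo (-m) m := by
          constructor
          · nlinarith [hxm2, hm, sq_nonneg (x + m)]
          · nlinarith [hxm2, hm, sq_nonneg (x - m)]
        have hTx : Real.sqrt (m^2 - x^2) = m / Real.sqrt (1 + t^2) := by
          have hval : m^2 - x^2 = (m / Real.sqrt (1 + t^2))^2 := by
            rw [hxdef, div_pow, div_pow, mul_pow, hs2]
            field_simp
            ring
          rw [hval, Real.sqrt_sq (by positivity)]
        refine ⟨x, Ioo_subset_Icc_self hxI, ?_⟩
        rw [hfi x hxI, hTx]
        have hxt : x / (m / Real.sqrt (1 + t^2)) = t := by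
          rw [hxdef]; field_simp
        rw [hxt, ht, neg_neg]


lemma arg_mk_pos' {x y : ℝ} (hx : 0 < x) :
    Complex.arg ((x : ℂ) + (y : ℝ) * Complex.I) = Real.arctan (y / x) := by
  set z : ℂ := (x : ℂ) + (y : ℝ) * Complex.I with hzdef
  have hz : z.re = x := by simp [hzdef]
  have hz' : z.im = y := by simp [hzdef]
  have h1 : |Complex.arg z| < π/2 :=
    Complex.abs_arg_lt_pi_div_two_iff.2 (Or.inl (by rw [hz]; exact hx))
  have h2 := Complex.tan_arg z
  rw [hz, hz'] at h2
  rw [← h2, Real.arctan_tan (by linarith [(abs_lt.1 h1).1]) (by linarith [(abs_lt.1 h1).2])]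

lemma gamma_sign_pos {α : ℝ} (h0 : 0 < α) (h1 : α < 1) :
    Real.Gamma (-α) / Real.Gamma (1 + α) < 0 := by
  have h2 : Real.Gamma (-α + 1) = -α * Real.Gamma (-α) := Real.Gamma_add_one (by linarith)
  have h3 : 0 < Real.Gamma (-α + 1) := Real.Gamma_pos_of_pos (by linarith)
  have h4 : 0 < Real.Gamma (1 + α) := Real.Gamma_pos_of_pos (by linarith)
  have h5 : Real.Gamma (-α) < 0 := by nlinarith
  exact div_neg_of_neg_of_pos h5 h4

lemma gamma_sign_neg {α : ℝ} (h0 : α < 0) (h1 : -1 < α) :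
    0 < Real.Gamma (-α) / Real.Gamma (1 + α) :=
  div_pos (Real.Gamma_pos_of_pos (by linarith)) (Real.Gamma_pos_of_pos (by linarith))

lemma trig_aux {a : ℝ} (t : ℝ) (ha0 : a ≠ 0) (ha2 : |a| < 1/2) :
    (-(Real.cos (π*a) * Real.sinh (π*a*t))) / (Real.sin (π*a) * Real.cosh (π*a*t))
      = -(Real.tan (π/2 - π * |a|) * Real.tanh (π * |a| * t)) := by
  have ha2' := abs_lt.1 ha2
  have hπa_lt : π * |a| < π := by nlinarith [Real.pi_pos]
  have hsinabs : 0 < Real.sin (π * |a|) :=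
    Real.sin_pos_of_pos_of_lt_pi (by positivity) hπa_lt
  rw [Real.tan_pi_div_two_sub, Real.tan_eq_sin_div_cos, Real.tanh_eq_sinh_div_cosh]
  rcases lt_or_gt_of_ne ha0 with h | h
  · rw [abs_of_neg h, show π * -a = -(π*a) by ring]
    rw [show -(π*a) * t = -(π*a*t) by ring]
    rw [Real.sin_neg, Real.cos_neg, Real.sinh_neg, Real.cosh_neg]
    have e1 : (-Real.sin (π*a) / Real.cos (π*a))⁻¹ = -(Real.cos (π*a) / Real.sin (π*a)) := by
      rw [neg_div, inv_neg, inv_div]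
    have e2 : -Real.sinh (π*a*t) / Real.cosh (π*a*t)
        = -(Real.sinh (π*a*t) / Real.cosh (π*a*t)) := neg_div _ _
    rw [e1, e2, neg_mul_neg, div_mul_div_comm, neg_div]
  · rw [abs_of_pos h, inv_div, div_mul_div_comm, neg_div]

lemma interior_arg (α C t : ℝ) (hα0 : α ≠ 0) (hα1 : |α| < 1) (hC : 0 < C) :
    Complex.arg ((C : ℂ) * (Complex.Gamma (-(α : ℂ)) / Complex.Gamma (1 + (α : ℂ))) *
      (Complex.Gamma (1 + ((α : ℂ) / 2) * (1 + (t : ℂ) * Complex.I)) /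
        Complex.Gamma (-((α : ℂ) / 2) * (1 - (t : ℂ) * Complex.I)))) =
    - Real.arctan (Real.tan (π / 2 - π * |α| / 2) * Real.tanh (π * |α| / 2 * t)) := by
  have hα1' := abs_lt.1 hα1
  set a : ℝ := α / 2 with hadef
  have ha0 : a ≠ 0 := div_ne_zero hα0 two_ne_zero
  have ha2 : |a| < 1/2 := by
    rw [hadef, abs_div, abs_two]; linarith [hα1]
  have ha2' := abs_lt.1 ha2
  have habs : |α| = 2 * |a| := by
    rw [hadef, abs_div, abs_two]; ring
  have hcast : ((α : ℂ) / 2) = ((a : ℝ) : ℂ) := by rw [hadef]; push_cast; ring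
  rw [hcast]
  set z1 : ℂ := 1 + (a : ℂ) * (1 + (t : ℂ) * Complex.I) with hz1
  set v : ℂ := (a : ℂ) * (1 - (t : ℂ) * Complex.I) with hv
  have hvz : -((a:ℝ):ℂ) * (1 - (t:ℂ) * Complex.I) = -v := by rw [hv]; ring
  rw [hvz]
  have hconj : v = (starRingEnd ℂ) ((a : ℂ) * (1 + (t : ℂ) * Complex.I)) := by
    rw [hv]
    simp only [map_mul, map_add, map_one, Complex.conj_ofReal, Complex.conj_I]
    ring
  have h1v : (1 : ℂ) + v = (starRingEnd ℂ) z1 := by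
    rw [hz1, hconj]; simp
  have hv_ne : ∀ k : ℤ, v ≠ (k : ℂ) := by
    intro k hk
    have hre : v.re = a := by rw [hv]; simp
    rw [hk] at hre
    simp at hre
    rw [← hre] at ha2
    have hk0 : k = 0 := by
      by_contra hne
      have h1 := Int.one_le_abs (by exact_mod_cast hne : k ≠ 0)
      have : (1 : ℝ) ≤ |(k : ℝ)| := by exact_mod_cast h1
      linarith
    rw [hk0] at hre; exact ha0 (by exact_mod_cast hre.symm)
  have hsin_ne : Complex.sin ((π : ℂ) * v) ≠ 0 := by
    rw [Ne, Complex.sin_eq_zero_iff]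
    rintro ⟨k, hk⟩
    have hπ : (π : ℂ) ≠ 0 := Complex.ofReal_ne_zero.2 Real.pi_ne_zero
    have h2 : (π:ℂ) * v = (π:ℂ) * (k:ℂ) := by rw [hk]; ring
    exact hv_ne k (mul_left_cancel₀ hπ h2)
  have hz1_ne : Complex.Gamma z1 ≠ 0 := by
    apply Complex.Gamma_ne_zero
    intro n hn
    have hre : z1.re = 1 + a := by rw [hz1]; simp
    rw [hn] at hre
    simp at hre
    have hn0 : (0:ℝ) ≤ (n:ℝ) := Nat.cast_nonneg n
    linarith
  have hΓ1v_ne : Complex.Gamma (1 + v) ≠ 0 := by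
    rw [h1v, Complex.Gamma_conj]
    simpa using hz1_ne
  have hrefl := Complex.Gamma_mul_Gamma_one_sub (-v)
  rw [sub_neg_eq_add, mul_neg, Complex.sin_neg] at hrefl
  have hGammaNegV : Complex.Gamma (-v)
      = (-(π:ℂ)) / (Complex.sin ((π:ℂ)*v) * Complex.Gamma (1 + v)) := by
    rw [eq_div_iff (mul_ne_zero hsin_ne hΓ1v_ne)]
    rw [eq_div_iff (neg_ne_zero.2 hsin_ne)] at hrefl
    linear_combination -hrefl
  have hns : (0:ℝ) < Complex.normSq (Complex.Gamma z1) := Complex.normSq_pos.2 hz1_ne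
  have hratio : Complex.Gamma z1 / Complex.Gamma (-v)
      = -(((Complex.normSq (Complex.Gamma z1) : ℝ) : ℂ) / (π:ℂ)) * Complex.sin ((π:ℂ)*v) := by
    have hmc : Complex.Gamma z1 * (starRingEnd ℂ) (Complex.Gamma z1)
        = ((Complex.normSq (Complex.Gamma z1) : ℝ) : ℂ) := Complex.mul_conj _
    rw [hGammaNegV, h1v, Complex.Gamma_conj, div_div_eq_mul_div,
      show Complex.Gamma z1 * (Complex.sin ((π:ℂ)*v) * (starRingEnd ℂ) (Complex.Gamma z1))
        = ((Complex.normSq (Complex.Gamma z1) : ℝ) : ℂ) * Complex.sin ((π:ℂ)*v) by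
          rw [← hmc]; ring,
      div_neg, mul_div_right_comm, neg_mul]
  have hsinv : Complex.sin ((π:ℂ) * v)
      = ((Real.sin (π*a) * Real.cosh (π*a*t) : ℝ) : ℂ)
        - ((Real.cos (π*a) * Real.sinh (π*a*t) : ℝ) : ℂ) * Complex.I := by
    have hπv : (π:ℂ) * v = ((π*a : ℝ):ℂ) - ((π*a*t : ℝ):ℂ) * Complex.I := by
      rw [hv]; push_cast; ring
    rw [hπv, Complex.sin_sub, ← Complex.ofReal_sin, ← Complex.ofReal_cos,
      Complex.cos_mul_I, Complex.sin_mul_I, ← Complex.ofReal_sinh, ← Complex.ofReal_cosh]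
    push_cast
    ring
  have hgr : Complex.Gamma (-(α:ℂ)) / Complex.Gamma (1 + (α:ℂ))
      = ((Real.Gamma (-α) / Real.Gamma (1+α) : ℝ) : ℂ) := by
    rw [show -(α:ℂ) = ((-α : ℝ) : ℂ) by push_cast; ring,
      show (1 : ℂ) + (α:ℂ) = ((1 + α : ℝ) : ℂ) by push_cast; ring,
      Complex.Gamma_ofReal, Complex.Gamma_ofReal]
    push_cast
    ring
  set g : ℝ := Real.Gamma (-α) / Real.Gamma (1+α) with hg
  set ns : ℝ := Complex.normSq (Complex.Gamma z1) with hnsdef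
  set ρ : ℝ := C * g * (-(ns/π)) with hρ
  set X : ℝ := Real.sin (π*a) * Real.cosh (π*a*t) with hX
  set Y : ℝ := -(Real.cos (π*a) * Real.sinh (π*a*t)) with hY
  have hwhole : (C : ℂ) * (Complex.Gamma (-(α:ℂ)) / Complex.Gamma (1 + (α:ℂ)))
      * (Complex.Gamma z1 / Complex.Gamma (-v))
      = ((ρ * X : ℝ) : ℂ) + ((ρ * Y : ℝ) : ℂ) * Complex.I := by
    rw [hgr, hratio, hsinv, hρ, hX, hY]
    push_cast
    ring
  rw [hwhole]
  have hcosh : 0 < Real.cosh (π*a*t) := Real.cosh_pos (π*a*t)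
  have hπa_lt : π * |a| < π := by
    nlinarith [Real.pi_pos]
  have hsinabs : 0 < Real.sin (π * |a|) :=
    Real.sin_pos_of_pos_of_lt_pi (by positivity) hπa_lt
  have hρX : 0 < ρ * X := by
    rcases lt_or_gt_of_ne hα0 with h | h
    · have hgpos : 0 < g := gamma_sign_neg h hα1'.1
      have hρneg : ρ < 0 := by
        have h1 : 0 < ns / π := div_pos hns Real.pi_pos
        rw [hρ]; nlinarith [mul_pos (mul_pos hC hgpos) h1]
      have hXneg : X < 0 := by
        have ha' : a < 0 := by rw [hadef]; linarith
        have hs : Real.sin (π * a) < 0 := by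
          have heq : Real.sin (π * a) = -Real.sin (π * |a|) := by
            rw [abs_of_neg ha', mul_neg, Real.sin_neg, neg_neg]
          rw [heq]; linarith
        rw [hX]; exact mul_neg_of_neg_of_pos hs hcosh
      exact mul_pos_of_neg_of_neg hρneg hXneg
    · have hgneg : g < 0 := gamma_sign_pos h hα1'.2
      have hρpos : 0 < ρ := by
        have h1 : 0 < ns / π := div_pos hns Real.pi_pos
        rw [hρ]; nlinarith [mul_pos (mul_pos hC (neg_pos.2 hgneg)) h1]
      have hXpos : 0 < X := by
        have ha' : 0 < a := by rw [hadef]; linarith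
        have hs : 0 < Real.sin (π * a) := by rwa [abs_of_pos ha'] at hsinabs
        rw [hX]; exact mul_pos hs hcosh
      exact mul_pos hρpos hXpos
  rw [arg_mk_pos' hρX]
  have hρ0 : ρ ≠ 0 := by
    intro h; rw [h, zero_mul] at hρX; exact lt_irrefl 0 hρX
  rw [mul_div_mul_left _ _ hρ0]
  have hgoal1 : π * |α| / 2 = π * |a| := by rw [habs]; ring
  rw [hgoal1]
  have hYX : Y / X = -(Real.tan (π/2 - π * |a|) * Real.tanh (π * |a| * t)) := by
    rw [hX, hY]; exact trig_aux t ha0 ha2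
  rw [hYX, Real.arctan_neg]


lemma arg_polar {r θ : ℝ} (hr : 0 < r) (hθ : θ ∈ Set.Ioc (-π) π) :
    Complex.arg ((r : ℂ) * Complex.exp ((θ : ℝ) * Complex.I)) = θ := by
  rw [Complex.exp_mul_I, Complex.arg_real_mul _ hr, Complex.arg_cos_add_sin_mul_I hθ]

lemma cpow_I_mul {c : ℝ} (hc : c ≠ 0) (β : ℝ) :
    (((c : ℝ) : ℂ) * Complex.I) ^ ((β : ℝ) : ℂ)
      = ((Real.exp (β * Real.log |c|) : ℝ) : ℂ)
        * Complex.exp (((β * ((if 0 < c then (1:ℝ) else -1) * (π/2)) : ℝ)) * Complex.I) := by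
  have hw : ((c : ℝ) : ℂ) * Complex.I ≠ 0 :=
    mul_ne_zero (Complex.ofReal_ne_zero.2 hc) Complex.I_ne_zero
  have habs : ‖((c : ℝ) : ℂ) * Complex.I‖ = |c| := by
    rw [norm_mul, Complex.norm_I, mul_one, Complex.norm_real, Real.norm_eq_abs]
  have harg : Complex.arg (((c : ℝ) : ℂ) * Complex.I) = (if 0 < c then (1:ℝ) else -1) * (π/2) := by
    rcases lt_or_gt_of_ne hc with h | h
    · rw [if_neg (not_lt.2 h.le)]
      rw [show ((c : ℝ) : ℂ) * Complex.I = ((-c : ℝ) : ℂ) * (-Complex.I) by push_cast; ring]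
      rw [Complex.arg_real_mul _ (by linarith), Complex.arg_neg_I]
      ring
    · rw [if_pos h, one_mul, Complex.arg_real_mul _ h, Complex.arg_I]
  have hlog : Complex.log (((c : ℝ) : ℂ) * Complex.I)
      = ((Real.log |c| : ℝ) : ℂ)
        + (((if 0 < c then (1:ℝ) else -1) * (π/2) : ℝ) : ℂ) * Complex.I := by
    apply Complex.ext
    · rw [Complex.log_re, habs]; simp
    · rw [Complex.log_im, harg]; simp
  rw [Complex.cpow_def_of_ne_zero hw]
  rw [show Complex.log (((c : ℝ) : ℂ) * Complex.I) * ((β : ℝ) : ℂ)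
      = ((β * Real.log |c| : ℝ) : ℂ)
        + ((β * ((if 0 < c then (1:ℝ) else -1) * (π/2)) : ℝ) : ℂ) * Complex.I by
    rw [hlog]; push_cast; ring]
  rw [Complex.exp_add, Complex.ofReal_exp]

lemma gamma_ratio_real (α : ℝ) : Complex.Gamma (-(α : ℂ)) / Complex.Gamma (1 + (α : ℂ))
    = ((Real.Gamma (-α) / Real.Gamma (1 + α) : ℝ) : ℂ) := by
  rw [show -(α:ℂ) = ((-α : ℝ) : ℂ) by push_cast; ring,
    show (1 : ℂ) + (α:ℂ) = ((1 + α : ℝ) : ℂ) by push_cast; ring,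
    Complex.Gamma_ofReal, Complex.Gamma_ofReal]
  push_cast
  ring

lemma gamma_sign_pos' {α : ℝ} (h0 : 0 < α) (h1 : α < 1) :
    Real.Gamma (-α) / Real.Gamma (1 + α) < 0 := by
  have h2 : Real.Gamma (-α + 1) = -α * Real.Gamma (-α) := Real.Gamma_add_one (by linarith)
  have h3 : 0 < Real.Gamma (-α + 1) := Real.Gamma_pos_of_pos (by linarith)
  have h4 : 0 < Real.Gamma (1 + α) := Real.Gamma_pos_of_pos (by linarith)
  have h5 : Real.Gamma (-α) < 0 := by nlinarith
  exact div_neg_of_neg_of_pos h5 h4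

lemma gamma_sign_neg' {α : ℝ} (h0 : α < 0) (h1 : -1 < α) :
    0 < Real.Gamma (-α) / Real.Gamma (1 + α) :=
  div_pos (Real.Gamma_pos_of_pos (by linarith)) (Real.Gamma_pos_of_pos (by linarith))

lemma arg_neg_coef_add {s θ : ℝ} (hs : s < 0) (hθ : θ + π ∈ Set.Ioc (-π) π) :
    Complex.arg ((s : ℂ) * Complex.exp ((θ : ℝ) * Complex.I)) = θ + π := by
  have h1 : ((s : ℝ) : ℂ) * Complex.exp ((θ : ℝ) * Complex.I)
      = ((-s : ℝ) : ℂ) * Complex.exp (((θ + π : ℝ)) * Complex.I) := by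
    have h2 : ((θ + π : ℝ) : ℂ) * Complex.I = (θ : ℝ) * Complex.I + (π : ℝ) * Complex.I := by
      push_cast; ring
    rw [h2, Complex.exp_add, Complex.exp_pi_mul_I]
    push_cast; ring
  rw [h1, arg_polar (by linarith) hθ]

lemma arg_neg_coef_sub {s θ : ℝ} (hs : s < 0) (hθ : θ - π ∈ Set.Ioc (-π) π) :
    Complex.arg ((s : ℂ) * Complex.exp ((θ : ℝ) * Complex.I)) = θ - π := by
  have h1 : ((s : ℝ) : ℂ) * Complex.exp ((θ : ℝ) * Complex.I)
      = ((-s : ℝ) : ℂ) * Complex.exp (((θ - π : ℝ)) * Complex.I) := by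
    have h2 : ((θ : ℝ) : ℂ) * Complex.I = (θ - π : ℝ) * Complex.I + (π : ℝ) * Complex.I := by
      push_cast; ring
    rw [h2, Complex.exp_add, Complex.exp_pi_mul_I]
    push_cast; ring
  rw [h1, arg_polar (by linarith) hθ]

lemma endpoint_arg {α κ₂ ρ₃ x : ℝ} (hα0 : α ≠ 0) (hα1 : |α| < 1) (hκ₂ : 0 < κ₂)
    (hρ₃ : 0 < ρ₃) (hx : x ≠ 0) :
    Complex.arg ((Complex.I * (α : ℂ) * (x : ℂ)) ^ ((1 : ℂ) + (α : ℂ)) /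
        ((κ₂ : ℂ) * ((ρ₃ ^ α : ℝ) : ℂ)) *
      (Complex.Gamma (-(α : ℂ)) / Complex.Gamma (1 + (α : ℂ))))
    = (if 0 < x then -(π/2 * (1 - |α|)) else π/2 * (1 - |α|)) := by
  have hα1' := abs_lt.1 hα1
  have hπ := Real.pi_pos
  set c : ℝ := α * x with hcdef
  have hc : c ≠ 0 := mul_ne_zero hα0 hx
  have hIax : Complex.I * (α : ℂ) * (x : ℂ) = ((c : ℝ) : ℂ) * Complex.I := by
    rw [hcdef]; push_cast; ring
  have hcast : ((1 : ℂ) + (α : ℂ)) = ((1 + α : ℝ) : ℂ) := by push_cast; ring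
  rw [hIax, gamma_ratio_real, hcast, cpow_I_mul hc]
  set R : ℝ := Real.exp ((1 + α) * Real.log |c|) with hR
  have hRpos : 0 < R := Real.exp_pos _
  set g : ℝ := Real.Gamma (-α) / Real.Gamma (1 + α) with hg
  set D : ℝ := κ₂ * ρ₃ ^ α with hD
  have hDpos : 0 < D := mul_pos hκ₂ (Real.rpow_pos_of_pos hρ₃ α)
  have hDcast : (κ₂ : ℂ) * ((ρ₃ ^ α : ℝ) : ℂ) = ((D : ℝ) : ℂ) := by rw [hD]; push_cast; ring
  rw [hDcast]
  have hexpr : ∀ θ : ℝ, ((R : ℝ) : ℂ) * Complex.exp ((θ : ℝ) * Complex.I) / ((D : ℝ) : ℂ)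
      * ((g : ℝ) : ℂ) = ((R / D * g : ℝ) : ℂ) * Complex.exp ((θ : ℝ) * Complex.I) := by
    intro θ
    push_cast
    field_simp
  rw [hexpr]
  rcases lt_or_gt_of_ne hα0 with hαneg | hαpos
  · have hgpos : 0 < g := gamma_sign_neg' hαneg hα1'.1
    have hspos : 0 < R / D * g := by positivity
    have habsα : |α| = -α := abs_of_neg hαneg
    rcases lt_or_gt_of_ne hx with hxneg | hxpos
    · have hcpos : 0 < c := by rw [hcdef]; exact mul_pos_of_neg_of_neg hαneg hxneg
      rw [if_pos hcpos, if_neg (not_lt.2 hxneg.le)]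
      rw [arg_polar hspos ⟨by nlinarith, by nlinarith⟩]
      rw [habsα]; ring
    · have hcneg : c < 0 := by rw [hcdef]; exact mul_neg_of_neg_of_pos hαneg hxpos
      rw [if_neg (not_lt.2 hcneg.le), if_pos hxpos]
      rw [arg_polar hspos ⟨by nlinarith, by nlinarith⟩]
      rw [habsα]; ring
  · have hgneg : g < 0 := gamma_sign_pos' hαpos hα1'.2
    have hsneg : R / D * g < 0 := mul_neg_of_pos_of_neg (div_pos hRpos hDpos) hgneg
    have habsα : |α| = α := abs_of_pos hαpos
    rcases lt_or_gt_of_ne hx with hxneg | hxpos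
    · have hcneg : c < 0 := by rw [hcdef]; exact mul_neg_of_pos_of_neg hαpos hxneg
      rw [if_neg (not_lt.2 hcneg.le), if_neg (not_lt.2 hxneg.le)]
      rw [arg_neg_coef_add hsneg ⟨by nlinarith, by nlinarith⟩]
      rw [habsα]; ring
    · have hcpos : 0 < c := mul_pos hαpos hxpos
      rw [if_pos hcpos, if_pos hxpos]
      rw [arg_neg_coef_sub hsneg ⟨by nlinarith, by nlinarith⟩]
      rw [habsα]; ring
theorem stmt15 (ρ₁ ρ₂ κ₁ κ₂ : ℝ)
    (hρ₁ : 0 < ρ₁) (hρ₂ : 0 < ρ₂) (hκ₁ : 0 < κ₁) (hκ₂ : 0 < κ₂)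
    (ρ₃ α : ℝ)
    (hρ₃ : ρ₃ = (ρ₁ + ρ₂) / 2)
    (hα : α = (ρ₂ - ρ₁) / (ρ₂ + ρ₁))
    (ω : ℝ → ℂ)
    (hω₁ : ∀ κ₃ ∈ Icc (-Real.sqrt (κ₁ * κ₂)) (Real.sqrt (κ₁ * κ₂)),
      ρ₁ ≠ ρ₂ → 0 < Real.sqrt (κ₁ * κ₂ - κ₃ ^ 2) → ω κ₃ =
        ((((2 * Real.sqrt (κ₁ * κ₂ - κ₃ ^ 2)) ^ (1 + α) : ℝ) /
            (κ₂ * (ρ₃ ^ α : ℝ)) : ℝ) : ℂ) *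
          (Complex.Gamma (-(α : ℂ)) / Complex.Gamma (1 + (α : ℂ))) *
          (Complex.Gamma (1 + ((α : ℂ) / 2) *
              (1 + Complex.I * (κ₃ : ℂ) / (Real.sqrt (κ₁ * κ₂ - κ₃ ^ 2) : ℂ))) /
            Complex.Gamma (-((α : ℂ) / 2) *
              (1 - Complex.I * (κ₃ : ℂ) / (Real.sqrt (κ₁ * κ₂ - κ₃ ^ 2) : ℂ)))))
    (hω₂ : ∀ κ₃ ∈ Icc (-Real.sqrt (κ₁ * κ₂)) (Real.sqrt (κ₁ * κ₂)),
      ρ₁ ≠ ρ₂ → Real.sqrt (κ₁ * κ₂ - κ₃ ^ 2) = 0 → ω κ₃ =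
        (Complex.I * (α : ℂ) * (κ₃ : ℂ)) ^ ((1 : ℂ) + (α : ℂ)) /
          ((κ₂ : ℂ) * ((ρ₃ ^ α : ℝ) : ℂ)) *
          (Complex.Gamma (-(α : ℂ)) / Complex.Gamma (1 + (α : ℂ))))
    (hω₃ : ∀ κ₃ ∈ Icc (-Real.sqrt (κ₁ * κ₂)) (Real.sqrt (κ₁ * κ₂)),
      ρ₁ = ρ₂ → ω κ₃ =
        ((Real.sqrt (κ₁ * κ₂ - κ₃ ^ 2) : ℂ) - Complex.I * (κ₃ : ℂ)) / (κ₂ : ℂ)) :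
    StrictAntiOn (fun κ₃ => Complex.arg (ω κ₃))
        (Icc (-Real.sqrt (κ₁ * κ₂)) (Real.sqrt (κ₁ * κ₂))) ∧
    (∀ κ₃ ∈ Icc (-Real.sqrt (κ₁ * κ₂)) (Real.sqrt (κ₁ * κ₂)),
        Complex.arg (ω (-κ₃)) = -Complex.arg (ω κ₃)) ∧
    BijOn (fun κ₃ => Complex.arg (ω κ₃))
        (Icc (-Real.sqrt (κ₁ * κ₂)) (Real.sqrt (κ₁ * κ₂)))
        (Icc (-(π / 2) * (1 - |α|)) ((π / 2) * (1 - |α|))) := by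
  have hm0 : 0 < κ₁ * κ₂ := mul_pos hκ₁ hκ₂
  set m : ℝ := Real.sqrt (κ₁ * κ₂) with hmdef
  have hm : 0 < m := Real.sqrt_pos.2 hm0
  have hm2 : m ^ 2 = κ₁ * κ₂ := Real.sq_sqrt hm0.le
  have hρ₃pos : 0 < ρ₃ := by rw [hρ₃]; linarith
  have hα1 : |α| < 1 := by
    rw [hα, abs_div, abs_of_pos (show (0:ℝ) < ρ₂ + ρ₁ by linarith),
      div_lt_one (by linarith)]
    rw [abs_lt]; constructor <;> linarith
  set B : ℝ := π / 2 * (1 - |α|) with hB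
  have hBpos : 0 < B := by
    have h0 := abs_nonneg α
    rw [hB]; nlinarith [Real.pi_pos, hα1]
  rw [show (-(π / 2) * (1 - |α|)) = -B by rw [hB]; ring]
  have hIoo : ∀ x ∈ Ioo (-m) m, 0 < Real.sqrt (κ₁ * κ₂ - x ^ 2) := by
    intro x hx
    apply Real.sqrt_pos.2
    nlinarith [hx.1, hx.2, hm2]
  have hend : Real.sqrt (κ₁ * κ₂ - m ^ 2) = 0 := by rw [← hm2]; simp
  have hendneg : Real.sqrt (κ₁ * κ₂ - (-m) ^ 2) = 0 := by rw [neg_sq]; exact hend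
  have hmmem : m ∈ Icc (-m) m := ⟨by linarith, le_refl m⟩
  have hnegmmem : -m ∈ Icc (-m) m := ⟨le_refl _, by linarith⟩
  by_cases hρ : ρ₁ = ρ₂
  · -- case α = 0
    have hα0 : α = 0 := by rw [hα, hρ]; simp
    have hBv : B = π / 2 := by rw [hB, hα0]; norm_num
    have hfi : ∀ x ∈ Ioo (-m) m,
        Complex.arg (ω x) = -Real.arctan (x / Real.sqrt (m ^ 2 - x ^ 2)) := by
      intro x hx
      have hκpos := hIoo x hx
      set κ : ℝ := Real.sqrt (κ₁ * κ₂ - x ^ 2) with hκdef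
      rw [hω₃ x (Ioo_subset_Icc_self hx) hρ]
      rw [show ((κ : ℝ) : ℂ) - Complex.I * (x : ℂ) = (κ : ℂ) + ((-x : ℝ) : ℂ) * Complex.I by
        push_cast; ring]
      rw [show ((κ:ℂ) + ((-x:ℝ):ℂ) * Complex.I) / (κ₂ : ℂ)
          = ((κ / κ₂ : ℝ) : ℂ) + ((-x / κ₂ : ℝ) : ℂ) * Complex.I by push_cast; ring]
      rw [arg_mk_pos (div_pos hκpos hκ₂)]
      rw [show (-x / κ₂) / (κ / κ₂) = -(x / κ) by
        rw [div_div_div_eq, mul_comm, mul_div_mul_left _ _ (ne_of_gt hκ₂), neg_div]]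
      rw [Real.arctan_neg, hκdef, hm2]
    have hfl : Complex.arg (ω (-m)) = B := by
      rw [hω₃ (-m) hnegmmem hρ, hendneg]
      rw [show ((0:ℝ):ℂ) - Complex.I * ((-m : ℝ):ℂ) = ((m : ℝ):ℂ) * Complex.I by
        push_cast; ring]
      rw [show ((m:ℝ):ℂ) * Complex.I / (κ₂:ℂ) = ((m/κ₂ : ℝ):ℂ) * Complex.I by
        push_cast; ring]
      rw [Complex.arg_real_mul _ (div_pos hm hκ₂), Complex.arg_I, hBv]
    have hfr : Complex.arg (ω m) = -B := by
      rw [hω₃ m hmmem hρ, hend]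
      rw [show ((0:ℝ):ℂ) - Complex.I * ((m : ℝ):ℂ) = ((m : ℝ):ℂ) * (-Complex.I) by
        push_cast; ring]
      rw [show ((m:ℝ):ℂ) * (-Complex.I) / (κ₂:ℂ) = ((m/κ₂ : ℝ):ℂ) * (-Complex.I) by
        push_cast; ring]
      rw [Complex.arg_real_mul _ (div_pos hm hκ₂), Complex.arg_neg_I, hBv]
    obtain ⟨h1, h2, h3⟩ := abstract_main hm hBpos Real.arctan Real.arctan_strictMono
      Real.arctan_neg
      (fun t => by
        rw [hBv]
        exact abs_lt.2 ⟨neg_pi_div_two_lt_arctan t, arctan_lt_pi_div_two t⟩)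
      (fun y hy => by
        rw [hBv] at hy
        have hy' := abs_lt.1 hy
        exact ⟨Real.tan y, Real.arctan_tan (by linarith) hy'.2⟩)
      (fun x => Complex.arg (ω x)) hfi hfl hfr
    exact ⟨h1, h2, h3⟩
  · -- case α ≠ 0
    have hαne : α ≠ 0 := by
      rw [hα]
      exact div_ne_zero (sub_ne_zero.2 fun h => hρ h.symm) (by linarith)
    have hαabs : 0 < |α| := abs_pos.2 hαne
    have hBlt : B < π / 2 := by rw [hB]; nlinarith [Real.pi_pos]
    have hbB : π / 2 - π * |α| / 2 = B := by rw [hB]; ring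
    have hbpos : 0 < Real.tan (π / 2 - π * |α| / 2) := by
      rw [hbB]; exact Real.tan_pos_of_pos_of_lt_pi_div_two hBpos hBlt
    have hcpos : (0:ℝ) < π * |α| / 2 :=
      div_pos (mul_pos Real.pi_pos hαabs) two_pos
    set G : ℝ → ℝ := fun t =>
      Real.arctan (Real.tan (π / 2 - π * |α| / 2) * Real.tanh (π * |α| / 2 * t)) with hG
    have harcb : Real.arctan (Real.tan (π / 2 - π * |α| / 2)) = B := by
      rw [hbB]; exact Real.arctan_tan (by linarith) hBlt
    have hGmono : StrictMono G := by
      intro t1 t2 h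
      apply Real.arctan_strictMono
      apply (mul_lt_mul_iff_right₀ hbpos).2
      exact tanh_strictMono ((mul_lt_mul_iff_right₀ hcpos).2 h)
    have hGodd : ∀ t, G (-t) = -G t := by
      intro t
      simp only [hG]
      rw [mul_neg, Real.tanh_neg, mul_neg, Real.arctan_neg]
    have hGbdd : ∀ t, |G t| < B := by
      intro t
      have ht := abs_lt.1 (tanh_abs_lt_one (π * |α| / 2 * t))
      have h1 : Real.tan (π / 2 - π * |α| / 2) * Real.tanh (π * |α| / 2 * t)
          < Real.tan (π / 2 - π * |α| / 2) := by nlinarith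
      have h2 : -Real.tan (π / 2 - π * |α| / 2)
          < Real.tan (π / 2 - π * |α| / 2) * Real.tanh (π * |α| / 2 * t) := by nlinarith
      simp only [hG]
      rw [abs_lt]
      constructor
      · have h3 := Real.arctan_strictMono h2
        rw [Real.arctan_neg, harcb] at h3
        linarith
      · have h3 := Real.arctan_strictMono h1
        rw [harcb] at h3
        linarith
    have hGsurj : ∀ y, |y| < B → ∃ t, G t = y := by
      intro y hy
      have hy' := abs_lt.1 hy
      have hyI : y ∈ Ioo (-(π/2)) (π/2) := ⟨by linarith, by linarith⟩
      have hBI : (π / 2 - π * |α| / 2) ∈ Ioo (-(π/2)) (π/2) := by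
        constructor
        · rw [hbB]; linarith
        · rw [hbB]; exact hBlt
      have htan_lt : Real.tan y < Real.tan (π / 2 - π * |α| / 2) :=
        Real.strictMonoOn_tan hyI hBI (by rw [hbB]; exact hy'.2)
      have htan_gt : -Real.tan (π / 2 - π * |α| / 2) < Real.tan y := by
        have hnegI : -(π / 2 - π * |α| / 2) ∈ Ioo (-(π/2)) (π/2) := by
          constructor
          · rw [hbB]; linarith
          · rw [hbB]; linarith
        have h4 := Real.strictMonoOn_tan hnegI hyI (by rw [hbB]; linarith)
        rw [Real.tan_neg] at h4
        linarith
      have hv : |Real.tan y / Real.tan (π / 2 - π * |α| / 2)| < 1 := by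
        rw [abs_div, abs_of_pos hbpos, div_lt_one hbpos, abs_lt]
        exact ⟨htan_gt, htan_lt⟩
      obtain ⟨s, hs⟩ := tanh_surj hv
      refine ⟨s / (π * |α| / 2), ?_⟩
      simp only [hG]
      rw [show π * |α| / 2 * (s / (π * |α| / 2)) = s by field_simp]
      rw [hs]
      rw [show Real.tan (π / 2 - π * |α| / 2)
          * (Real.tan y / Real.tan (π / 2 - π * |α| / 2)) = Real.tan y by
        rw [mul_comm, div_mul_cancel₀ _ (ne_of_gt hbpos)]]
      exact Real.arctan_tan (by linarith) (by linarith)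
    have hfi : ∀ x ∈ Ioo (-m) m,
        Complex.arg (ω x) = -G (x / Real.sqrt (m ^ 2 - x ^ 2)) := by
      intro x hx
      have hκpos := hIoo x hx
      set κ : ℝ := Real.sqrt (κ₁ * κ₂ - x ^ 2) with hκdef
      have hCpos : 0 < (2 * κ) ^ (1 + α) / (κ₂ * ρ₃ ^ α) :=
        div_pos (Real.rpow_pos_of_pos (by linarith) _)
          (mul_pos hκ₂ (Real.rpow_pos_of_pos hρ₃pos _))
      rw [hω₁ x (Ioo_subset_Icc_self hx) hρ hκpos]
      rw [show Complex.I * (x:ℂ) / (κ:ℂ) = ((x / κ : ℝ):ℂ) * Complex.I by push_cast; ring]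
      rw [interior_arg α _ (x / κ) hαne hα1 hCpos]
      simp only [hG]
      rw [hκdef, hm2]
    have hfl : Complex.arg (ω (-m)) = B := by
      rw [hω₂ (-m) hnegmmem hρ hendneg]
      rw [endpoint_arg hαne hα1 hκ₂ hρ₃pos (neg_ne_zero.2 hm.ne')]
      rw [if_neg (not_lt.2 (by linarith : (-m:ℝ) ≤ 0)), ← hB]
    have hfr : Complex.arg (ω m) = -B := by
      rw [hω₂ m hmmem hρ hend]
      rw [endpoint_arg hαne hα1 hκ₂ hρ₃pos hm.ne']
      rw [if_pos hm, ← hB]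
    obtain ⟨h1, h2, h3⟩ := abstract_main hm hBpos G hGmono hGodd hGbdd hGsurj
      (fun x => Complex.arg (ω x)) hfi hfl hfr
    exact ⟨h1, h2, h3⟩
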